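/- Let R_0, R_1 be contractions on X and ρ a density operator with Re Tr(R_i ρ) = 1 − ε_i for i = 0,1. Then Re Tr(R_0 R_1 ρ) ≥ 1 − (√ε_0 + √ε_1)². -/

import Mathlib

open Matrix ComplexOrder

/-- A matrix is a contraction if `RᴴR ⪯ I`, i.e. its operator norm is at most `1`. -/
def IsContraction {n : ℕ} (R : Matrix (Fin n) (Fin n) ℂ) : Prop :=
  ((1 : Matrix (Fin n) (Fin n) ℂ) - Rᴴ * R).PosSemidef

noncomputable def toV {n : ℕ} (v : Fin n → ℂ) : EuclideanSpace ℂ (Fin n) := WithLp.toLp 2 v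

lemma inner_toV {n : ℕ} (v w : Fin n → ℂ) :
    (inner ℂ (toV v) (toV w) : ℂ) = dotProduct (star v) w := by
  simp [toV, PiLp.inner_apply, RCLike.inner_apply, dotProduct]
  exact Finset.sum_congr rfl fun _ _ => mul_comm _ _

lemma dot_self_eq_norm_sq {n : ℕ} (v : Fin n → ℂ) :
    dotProduct (star v) v = ((‖toV v‖ ^ 2 : ℝ) : ℂ) := by
  rw [← inner_toV, inner_self_eq_norm_sq_to_K]
  norm_cast

lemma key_dot {n : ℕ} (A : Matrix (Fin n) (Fin n) ℂ) (x : Fin n → ℂ) :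
    dotProduct (star x) ((Aᴴ * A) *ᵥ x) = dotProduct (star (A *ᵥ x)) (A *ᵥ x) := by
  rw [star_mulVec, ← dotProduct_mulVec, ← mulVec_mulVec]

lemma IsContraction.norm_mulVec_le {n : ℕ} {A : Matrix (Fin n) (Fin n) ℂ}
    (h : IsContraction A) (x : Fin n → ℂ) : ‖toV (A *ᵥ x)‖ ≤ ‖toV x‖ := by
  have h2 := Matrix.PosSemidef.dotProduct_mulVec_nonneg h x
  rw [Matrix.sub_mulVec, Matrix.one_mulVec, dotProduct_sub, key_dot,
    dot_self_eq_norm_sq, dot_self_eq_norm_sq, sub_nonneg] at h2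
  have h3 : ‖toV (A *ᵥ x)‖ ^ 2 ≤ ‖toV x‖ ^ 2 := by exact_mod_cast h2
  nlinarith [norm_nonneg (toV (A *ᵥ x)), norm_nonneg (toV x)]

lemma IsContraction.conjTranspose {n : ℕ} {A : Matrix (Fin n) (Fin n) ℂ}
    (h : IsContraction A) : IsContraction Aᴴ := by
  refine Matrix.PosSemidef.of_dotProduct_mulVec_nonneg ?_ ?_
  · simp only [conjTranspose_conjTranspose]
    exact Matrix.isHermitian_one.sub (Matrix.isHermitian_mul_conjTranspose_self A)
  · intro x
    simp only [conjTranspose_conjTranspose]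
    rw [Matrix.sub_mulVec, Matrix.one_mulVec, dotProduct_sub]
    have hkey : dotProduct (star x) ((Aᴴᴴ * Aᴴ) *ᵥ x)
        = dotProduct (star (Aᴴ *ᵥ x)) (Aᴴ *ᵥ x) := key_dot Aᴴ x
    rw [conjTranspose_conjTranspose] at hkey
    rw [hkey, dot_self_eq_norm_sq, dot_self_eq_norm_sq, sub_nonneg]
    set y := Aᴴ *ᵥ x with hy
    -- show ‖toV y‖^2 ≤ ‖toV x‖^2 (as complex reals)
    rw [Complex.real_le_real]
    -- ‖y‖² = re ⟪toV x, toV (A *ᵥ y)⟫ ≤ ‖x‖ ‖A y‖ ≤ ‖x‖ ‖y‖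
    have hiden : dotProduct (star y) y = dotProduct (star x) (A *ᵥ y) := by
      rw [hy, star_mulVec, conjTranspose_conjTranspose, ← dotProduct_mulVec]
    have h1 : ‖toV y‖ ^ 2 = RCLike.re (inner ℂ (toV x) (toV (A *ᵥ y)) : ℂ) := by
      rw [inner_toV, ← hiden, dot_self_eq_norm_sq]
      simp [← Complex.ofReal_pow]
    have h2 : RCLike.re (inner ℂ (toV x) (toV (A *ᵥ y)) : ℂ) ≤ ‖toV x‖ * ‖toV (A *ᵥ y)‖ :=
      re_inner_le_norm _ _
    have h3 : ‖toV (A *ᵥ y)‖ ≤ ‖toV y‖ := h.norm_mulVec_le y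
    nlinarith [norm_nonneg (toV y), norm_nonneg (toV x), norm_nonneg (toV (A *ᵥ y)),
      mul_le_mul_of_nonneg_left h3 (norm_nonneg (toV x)),
      sq_nonneg (‖toV x‖ - ‖toV y‖)]
noncomputable def toE {n : ℕ} (M : Matrix (Fin n) (Fin n) ℂ) :
    EuclideanSpace ℂ (Fin n × Fin n) := WithLp.toLp 2 (fun p : Fin n × Fin n => M p.1 p.2)

lemma inner_toE {n : ℕ} (X Y : Matrix (Fin n) (Fin n) ℂ) :
    (inner ℂ (toE X) (toE Y) : ℂ) = (Xᴴ * Y).trace := by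
  simp [toE, PiLp.inner_apply, RCLike.inner_apply, Matrix.trace, Matrix.mul_apply,
    Matrix.conjTranspose_apply, Matrix.diag, Fintype.sum_prod_type]
  rw [Finset.sum_comm]
  exact Finset.sum_congr rfl fun _ _ => Finset.sum_congr rfl fun _ _ => mul_comm _ _

lemma trace_re_nonneg {n : ℕ} {M : Matrix (Fin n) (Fin n) ℂ} (hM : M.PosSemidef) :
    0 ≤ (M.trace).re := by
  have h : ∀ i, 0 ≤ (M i i).re := by
    intro i
    have := hM.re_dotProduct_nonneg (Pi.single i 1)
    simpa [dotProduct, Matrix.mulVec, Pi.single_apply, Finset.sum_ite_eq,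
      Finset.sum_ite_eq'] using this
  simp only [Matrix.trace, Matrix.diag, Complex.re_sum]
  exact Finset.sum_nonneg fun i _ => h i


set_option maxHeartbeats 1000000 in
/-- If contractions `R₀`, `R₁` satisfy `Re Tr(Rᵢρ) = 1 − εᵢ`, then
`Re Tr(R₀R₁ρ) ≥ 1 − (√ε₀ + √ε₁)²`. -/
theorem product_approx_stabilizes {n : ℕ} (R0 R1 ρ : Matrix (Fin n) (Fin n) ℂ)
    (ε0 ε1 : ℝ)
    (h0 : IsContraction R0) (h1 : IsContraction R1)
    (hρ : ρ.PosSemidef) (htr : ρ.trace = 1)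
    (he0 : ((R0 * ρ).trace).re = 1 - ε0)
    (he1 : ((R1 * ρ).trace).re = 1 - ε1) :
    1 - (Real.sqrt ε0 + Real.sqrt ε1) ^ 2 ≤ ((R0 * R1 * ρ).trace).re := by
  set S := (open scoped MatrixOrder in CFC.sqrt ρ) with hSdef
  have hS : S.PosSemidef := (open scoped MatrixOrder in Matrix.nonneg_iff_posSemidef.mp (CFC.sqrt_nonneg ρ))
  have hSH : Sᴴ = S := hS.1
  have hSS : S * S = ρ := (open scoped MatrixOrder in CFC.sqrt_mul_sqrt_self ρ hρ.nonneg)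
  set u := toE S with hu_def
  set a := toE (R0ᴴ * S) with ha_def
  set b := toE (R1 * S) with hb_def
  have iuu : (inner ℂ u u : ℂ) = 1 := by
    rw [hu_def, inner_toE, hSH, hSS, htr]
  have hnu : ‖u‖ = 1 := by
    have h := inner_self_eq_norm_sq (𝕜 := ℂ) u
    rw [iuu] at h
    simp only [RCLike.one_re] at h
    nlinarith [norm_nonneg u]
  have iau : (inner ℂ a u : ℂ) = (R0 * ρ).trace := by
    rw [ha_def, hu_def, inner_toE, Matrix.conjTranspose_mul, conjTranspose_conjTranspose, hSH]
    rw [Matrix.mul_assoc, Matrix.trace_mul_comm, Matrix.mul_assoc, hSS]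
  have iub : (inner ℂ u b : ℂ) = (R1 * ρ).trace := by
    rw [hu_def, hb_def, inner_toE, hSH]
    rw [Matrix.trace_mul_comm, Matrix.mul_assoc, hSS]
  have iab : (inner ℂ a b : ℂ) = (R0 * R1 * ρ).trace := by
    rw [ha_def, hb_def, inner_toE, Matrix.conjTranspose_mul, conjTranspose_conjTranspose, hSH]
    rw [show S * R0 * (R1 * S) = S * (R0 * R1 * S) by noncomm_ring]
    rw [Matrix.trace_mul_comm, Matrix.mul_assoc, hSS]
  -- norm bounds
  have hbound : ∀ (T : Matrix (Fin n) (Fin n) ℂ),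
      ((1 : Matrix (Fin n) (Fin n) ℂ) - Tᴴ * T).PosSemidef → ‖toE (T * S)‖ ≤ 1 := by
    intro T hT
    have hpsd := hT.conjTranspose_mul_mul_same S
    have htr' := trace_re_nonneg hpsd
    have hexp : Sᴴ * ((1 : Matrix (Fin n) (Fin n) ℂ) - Tᴴ * T) * S
        = ρ - (T * S)ᴴ * (T * S) := by
      rw [Matrix.conjTranspose_mul, hSH, ← hSS]
      noncomm_ring
    rw [hexp, Matrix.trace_sub, Complex.sub_re, sub_nonneg, htr] at htr'
    have hn : RCLike.re (inner ℂ (toE (T * S)) (toE (T * S)) : ℂ) = ‖toE (T * S)‖ ^ 2 :=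
      inner_self_eq_norm_sq _
    rw [inner_toE] at hn
    simp only [Complex.one_re, RCLike.re_to_complex] at htr' hn
    nlinarith [norm_nonneg (toE (T * S))]
  have hna : ‖a‖ ≤ 1 := by
    have hc : ((1 : Matrix (Fin n) (Fin n) ℂ) - R0ᴴᴴ * R0ᴴ).PosSemidef :=
      h0.conjTranspose
    rw [conjTranspose_conjTranspose] at hc
    have := hbound R0ᴴ (by rwa [conjTranspose_conjTranspose])
    rwa [← ha_def] at this
  have hnb : ‖b‖ ≤ 1 := by
    have := hbound R1 h1
    rwa [← hb_def] at this
  -- epsilon sign facts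
  have hre_au : Complex.re (inner ℂ a u : ℂ) = 1 - ε0 := by rw [iau, he0]
  have hre_ub : Complex.re (inner ℂ u b : ℂ) = 1 - ε1 := by rw [iub, he1]
  have hε0 : 0 ≤ ε0 := by
    have h := re_inner_le_norm (𝕜 := ℂ) a u
    simp only [RCLike.re_to_complex] at h
    rw [hre_au, hnu, mul_one] at h
    linarith
  have hε1 : 0 ≤ ε1 := by
    have h := re_inner_le_norm (𝕜 := ℂ) u b
    simp only [RCLike.re_to_complex] at h
    rw [hre_ub, hnu, one_mul] at h
    linarith
  -- distance bounds
  have hd0 : ‖a - u‖ ^ 2 ≤ 2 * ε0 := by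
    have h := norm_sub_sq (𝕜 := ℂ) a u
    simp only [RCLike.re_to_complex] at h
    rw [hre_au, hnu] at h
    nlinarith [norm_nonneg a]
  have hd1 : ‖b - u‖ ^ 2 ≤ 2 * ε1 := by
    have h := norm_sub_sq (𝕜 := ℂ) b u
    simp only [RCLike.re_to_complex] at h
    have hsymm : (inner ℂ b u : ℂ).re = (inner ℂ u b : ℂ).re := by
      have := inner_re_symm (𝕜 := ℂ) b u
      simpa using this
    rw [hsymm, hre_ub, hnu] at h
    nlinarith [norm_nonneg b]
  have hd0' : ‖a - u‖ ≤ Real.sqrt (2 * ε0) := by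
    rw [← Real.sqrt_sq (norm_nonneg (a - u))]
    exact Real.sqrt_le_sqrt hd0
  have hd1' : ‖b - u‖ ≤ Real.sqrt (2 * ε1) := by
    rw [← Real.sqrt_sq (norm_nonneg (b - u))]
    exact Real.sqrt_le_sqrt hd1
  have hprod : ‖a - u‖ * ‖b - u‖ ≤ 2 * (Real.sqrt ε0 * Real.sqrt ε1) := by
    have : Real.sqrt (2 * ε0) * Real.sqrt (2 * ε1)
        = 2 * (Real.sqrt ε0 * Real.sqrt ε1) := by
      rw [Real.sqrt_mul (by norm_num : (0:ℝ) ≤ 2), Real.sqrt_mul (by norm_num : (0:ℝ) ≤ 2)]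
      have h2 : Real.sqrt 2 * Real.sqrt 2 = 2 := Real.mul_self_sqrt (by norm_num)
      calc Real.sqrt 2 * Real.sqrt ε0 * (Real.sqrt 2 * Real.sqrt ε1)
          = (Real.sqrt 2 * Real.sqrt 2) * (Real.sqrt ε0 * Real.sqrt ε1) := by ring
        _ = 2 * (Real.sqrt ε0 * Real.sqrt ε1) := by rw [h2]
    calc ‖a - u‖ * ‖b - u‖ ≤ Real.sqrt (2 * ε0) * Real.sqrt (2 * ε1) :=
          mul_le_mul hd0' hd1' (norm_nonneg _) (Real.sqrt_nonneg _)
      _ = 2 * (Real.sqrt ε0 * Real.sqrt ε1) := this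
  -- expansion
  have hexp : (inner ℂ a b : ℂ)
      = inner ℂ (a - u) (b - u) + inner ℂ (a - u) u + inner ℂ u (b - u) + inner ℂ u u := by
    simp only [inner_sub_left, inner_sub_right]
    ring
  have hre : Complex.re (inner ℂ a b : ℂ)
      = Complex.re (inner ℂ (a - u) (b - u) : ℂ) - ε0 - ε1 + 1 := by
    rw [hexp]
    simp only [Complex.add_re, inner_sub_left, inner_sub_right, Complex.sub_re]
    rw [iuu]
    have h1 : Complex.re (inner ℂ a u : ℂ) = 1 - ε0 := hre_au
    have h2 : Complex.re (inner ℂ u b : ℂ) = 1 - ε1 := hre_ub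
    have h3 : Complex.re (inner ℂ u u : ℂ) = 1 := by rw [iuu]; simp
    simp only [Complex.one_re]
    linarith
  have hcs : -(‖a - u‖ * ‖b - u‖) ≤ Complex.re (inner ℂ (a - u) (b - u) : ℂ) := by
    have h := norm_inner_le_norm (𝕜 := ℂ) (a - u) (b - u)
    have h2 := Complex.abs_re_le_norm (inner ℂ (a - u) (b - u) : ℂ)
    cases abs_le.mp (le_trans h2 h) with
    | intro hl hr => linarith
  have hfinal : Complex.re (inner ℂ a b : ℂ) ≥ 1 - ε0 - ε1 - 2 * (Real.sqrt ε0 * Real.sqrt ε1) := by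
    rw [hre]
    linarith
  rw [← iab] at *
  have hsq : (Real.sqrt ε0 + Real.sqrt ε1) ^ 2 = ε0 + 2 * (Real.sqrt ε0 * Real.sqrt ε1) + ε1 := by
    have := Real.sq_sqrt hε0
    have := Real.sq_sqrt hε1
    ring_nf
    nlinarith
  rw [hsq]
  linarith
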